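/- Let m be a fast sequence, g(i) = 2·(m°(i))^{i^i}, and p_i = m(i)^{−1/g(i)}. For each i let μ_i be the probability measure on graphs with vertex set {0,…,m(i)−1} (loops allowed) in which each unordered pair of vertices, including loops, is declared an edge independently with probability p_i. Then the μ_i-probability of the event 'there exists u ⊆ {0,…,m(i)−1} with |u| ≤ (m°(i))^{i^i} such that no vertex s is joined by an edge to every t ∈ u' tends to 0 as i → ∞. In particular, for all sufficiently large i there exists a symmetric graph E on {0,…,m(i)−1} in which every set u of at most (m°(i))^{i^i} vertices has a common neighbor. -/

import Mathlib

open MeasureTheory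
open scoped ENNReal

/-- `mCirc m i = ∏_{j<i} m j` (so `mCirc m 0 = 1`). -/
def mCirc (m : ℕ → ℕ) (i : ℕ) : ℕ := ∏ j ∈ Finset.range i, m j

/-- A *fast sequence* is `m : ℕ → ℕ` with `m 0 ≥ 2` and
`m i ≥ ((m°(i))^(i^i))^(4·(m°(i))^(i^i))` for all `i`. -/
def FastSeq (m : ℕ → ℕ) : Prop :=
  2 ≤ m 0 ∧ ∀ i, (mCirc m i ^ i ^ i) ^ (4 * mCirc m i ^ i ^ i) ≤ m i

/-- The Bernoulli measure on `Bool` giving `{true}` mass `p` and `{false}` mass `1 - p`. -/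
noncomputable def bernoulliBool (p : ℝ≥0∞) : Measure Bool :=
  p • Measure.dirac true + (1 - p) • Measure.dirac false

/-- A graph on `{0,…,n−1}` with loops allowed is identified with a function
`Sym2 (Fin n) → Bool` on unordered pairs (including singletons, i.e. loops);
`graphMeasure n p` is the product measure in which every unordered pair is an
edge independently with probability `p`. -/
noncomputable def graphMeasure (n : ℕ) (p : ℝ≥0∞) :
    Measure (Sym2 (Fin n) → Bool) :=
  Measure.pi fun _ => bernoulliBool p

/-- The edge probability `p_i = m(i)^{−1/g(i)}` where `g i = 2·(m°(i))^(i^i)`. -/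
noncomputable def pEdge (m : ℕ → ℕ) (i : ℕ) : ℝ≥0∞ :=
  (m i : ℝ≥0∞) ^ (-(1 : ℝ) / (2 * (mCirc m i : ℝ) ^ (i ^ i)))

/-- The bad event: there is a set `u` of at most `(m°(i))^(i^i)` vertices such that
no vertex `s` is joined by an edge to every `t ∈ u`. -/
def badEvent (m : ℕ → ℕ) (i : ℕ) : Set (Sym2 (Fin (m i)) → Bool) :=
  {E | ∃ u : Finset (Fin (m i)), u.card ≤ mCirc m i ^ i ^ i ∧
    ¬ ∃ s : Fin (m i), ∀ t ∈ u, E (Sym2.mk s t) = true}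

open Finset

/-! ### Auxiliary combinatorial lemma: factorization of weighted sums over fibers -/

section Key
variable {ι κ : Type*} [DecidableEq ι] [Fintype ι] [Fintype κ] [DecidableEq κ]

private def Phi (c : ι → κ) (f : ∀ k, {e : ι // c e = k} → Bool) : ι → Bool :=
  fun e => f (c e) ⟨e, rfl⟩

omit [DecidableEq ι] [Fintype ι] [Fintype κ] [DecidableEq κ] in
private lemma Phi_restrict (c : ι → κ) (f : ∀ k, {e : ι // c e = k} → Bool) (k : κ) :
    (fun e : {e : ι // c e = k} => Phi c f e.1) = f k := by
  funext e
  obtain ⟨e, he⟩ := e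
  subst he
  rfl

omit [DecidableEq ι] [Fintype ι] [Fintype κ] [DecidableEq κ] in
private lemma Phi_bijective (c : ι → κ) : Function.Bijective (Phi c) := by
  rw [Function.bijective_iff_has_inverse]
  refine ⟨fun E k e => E e.1, fun f => ?_, fun E => rfl⟩
  funext k e
  have := congrFun (Phi_restrict c f k) e
  simpa using this

lemma key_sum_prod (c : ι → κ) (w : Bool → ℝ≥0∞)
    (B : ∀ k, Finset ({e : ι // c e = k} → Bool)) :
    ∑ E : ι → Bool,
        (if ∀ k, (fun e : {e : ι // c e = k} => E e.1) ∈ B k then ∏ e, w (E e) else 0)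
      = ∏ k, ∑ h ∈ B k, ∏ e, w (h e) := by
  classical
  have hprod : ∀ f : ∀ k, {e : ι // c e = k} → Bool,
      ∏ e, w (Phi c f e) = ∏ k, ∏ e : {e : ι // c e = k}, w (f k e) := by
    intro f
    rw [← Equiv.prod_comp (Equiv.sigmaFiberEquiv c) (fun e => w (Phi c f e))]
    rw [← Finset.univ_sigma_univ, Finset.prod_sigma]
    refine Finset.prod_congr rfl fun k _ => Finset.prod_congr rfl fun e _ => ?_
    have := congrFun (Phi_restrict c f k) e
    rw [← this]
    rfl
  rw [Finset.prod_univ_sum]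
  rw [← Fintype.sum_bijective (Phi c) (Phi_bijective c)
    (fun f => if ∀ k, (fun e : {e : ι // c e = k} => Phi c f e.1) ∈ B k
        then ∏ e, w (Phi c f e) else 0)
    _ (fun f => rfl)]
  rw [← Finset.univ_inter (Fintype.piFinset B), ← Finset.sum_ite_mem]
  refine Finset.sum_congr rfl fun f _ => ?_
  have hcond : (∀ k, (fun e : {e : ι // c e = k} => Phi c f e.1) ∈ B k)
      ↔ f ∈ Fintype.piFinset B := by
    rw [Fintype.mem_piFinset]
    constructor
    · intro h k; have := h k; rwa [Phi_restrict] at this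
    · intro h k; rw [Phi_restrict]; exact h k
  by_cases h : f ∈ Fintype.piFinset B
  · rw [if_pos (hcond.2 h), if_pos h, hprod]
  · rw [if_neg (fun hh => h (hcond.1 hh)), if_neg h]

end Key

/-! ### Bernoulli weights and the product measure as a finite sum -/

noncomputable def bWeight (p : ℝ≥0∞) (b : Bool) : ℝ≥0∞ := if b then p else 1 - p

lemma bernoulliBool_singleton (p : ℝ≥0∞) (b : Bool) :
    bernoulliBool p {b} = bWeight p b := by
  cases b <;> simp [bernoulliBool, bWeight, Measure.dirac_apply]

lemma bernoulliBool_prob {p : ℝ≥0∞} (hp : p ≤ 1) :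
    IsProbabilityMeasure (bernoulliBool p) := by
  constructor
  simp only [bernoulliBool, Measure.coe_add, Measure.coe_smul, Pi.add_apply, Pi.smul_apply,
    Measure.dirac_apply, Set.mem_univ, Set.indicator_of_mem, Pi.one_apply, smul_eq_mul, mul_one]
  exact add_tsub_cancel_of_le hp

lemma sum_bWeight {p : ℝ≥0∞} (hp : p ≤ 1) : ∑ b : Bool, bWeight p b = 1 := by
  rw [Fintype.sum_bool]
  simp only [bWeight, if_true, if_false]
  exact add_tsub_cancel_of_le hp

lemma graphMeasure_singleton {n : ℕ} {p : ℝ≥0∞} (hp : p ≤ 1) (E : Sym2 (Fin n) → Bool) :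
    graphMeasure n p {E} = ∏ e, bWeight p (E e) := by
  haveI := bernoulliBool_prob hp
  have h : ({E} : Set (Sym2 (Fin n) → Bool)) = Set.pi Set.univ (fun e => {E e}) := by
    ext F
    simp [Set.mem_pi, funext_iff, eq_comm]
  rw [graphMeasure, h, Measure.pi_pi]
  simp [bernoulliBool_singleton]

lemma measure_set_eq_sum {α : Type*} [Fintype α] [DecidableEq α] [MeasurableSpace α]
    [MeasurableSingletonClass α] (μ : Measure α) (S : Set α) [DecidablePred (· ∈ S)] :
    μ S = ∑ a : α, (if a ∈ S then μ {a} else 0) := by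
  have h : S = ⋃ a ∈ Finset.univ.filter (· ∈ S), ({a} : Set α) := by
    ext x; simp
  have hd : (↑(Finset.univ.filter (· ∈ S) : Finset α) : Set α).PairwiseDisjoint
      (fun a => ({a} : Set α)) := by
    intro a _ b _ hab
    simp [Function.onFun, Set.disjoint_singleton, hab]
  have h2 := measure_biUnion_finset (μ := μ) hd (fun a _ => measurableSet_singleton a)
  rw [← h] at h2
  rw [h2, Finset.sum_filter]

lemma sum_all_fun {J : Type*} [Fintype J] [DecidableEq J] {p : ℝ≥0∞} (hp : p ≤ 1) :
    ∑ h : J → Bool, ∏ e, bWeight p (h e) = 1 := by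
  classical
  rw [← Fintype.piFinset_univ, ← Finset.prod_univ_sum (fun _ : J => (univ : Finset Bool))
    (fun _ b => bWeight p b)]
  have hs : bWeight p true + bWeight p false = 1 := by
    simpa [Fintype.sum_bool] using sum_bWeight hp
  simp [hs]

lemma sum_not_all_fun {J : Type*} [Fintype J] [DecidableEq J] {p : ℝ≥0∞} (hp : p ≤ 1) :
    ∑ h ∈ univ.filter (fun h : J → Bool => ¬ ∀ e, h e = true), ∏ e, bWeight p (h e)
      = 1 - p ^ (Fintype.card J) := by
  classical
  have h1 := Finset.sum_filter_add_sum_filter_not univ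
    (fun h : J → Bool => ∀ e, h e = true) (fun h => ∏ e, bWeight p (h e))
  rw [sum_all_fun hp] at h1
  have h2 : univ.filter (fun h : J → Bool => ∀ e, h e = true)
      = {fun _ => true} := by
    ext h
    simp [funext_iff]
  rw [h2, Finset.sum_singleton] at h1
  have h3 : (∏ e : J, bWeight p ((fun _ => true) e)) = p ^ Fintype.card J := by
    simp [bWeight]
  rw [h3] at h1
  have hpt : p ^ Fintype.card J ≠ ⊤ :=
    ENNReal.pow_ne_top (lt_of_le_of_lt hp (by norm_num)).ne
  exact ENNReal.eq_sub_of_add_eq hpt ((add_comm _ _).trans h1)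

/-! ### The block decomposition associated with a vertex set `u` -/

section Block
variable {n : ℕ}

noncomputable def blockOf (u : Finset (Fin n)) : Sym2 (Fin n) → Option (Fin n) :=
  Sym2.lift ⟨fun s t =>
    if s ∉ u ∧ t ∈ u then some s else if t ∉ u ∧ s ∈ u then some t else none, by
    intro s t
    dsimp only
    by_cases hs : s ∈ u <;> by_cases ht : t ∈ u <;> simp [hs, ht]⟩

lemma blockOf_mk {u : Finset (Fin n)} {s t : Fin n} (hs : s ∉ u) (ht : t ∈ u) :
    blockOf u (Sym2.mk s t) = some s := by
  simp [blockOf, hs, ht]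

lemma blockOf_eq_some {u : Finset (Fin n)} {s : Fin n} (hs : s ∉ u) (e : Sym2 (Fin n)) :
    blockOf u e = some s ↔ ∃ t ∈ u, e = Sym2.mk s t := by
  induction e using Sym2.inductionOn with
  | hf a b =>
    constructor
    · intro h
      by_cases ha : a ∈ u <;> by_cases hb : b ∈ u <;>
        simp [blockOf, ha, hb] at h
      · exact ⟨a, ha, by rw [← h, Sym2.eq_swap]⟩
      · exact ⟨b, hb, by rw [h]⟩
    · rintro ⟨t, ht, he⟩
      rw [he]
      exact blockOf_mk hs ht

lemma card_fiber (u : Finset (Fin n)) {s : Fin n} (hs : s ∉ u) :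
    Fintype.card {e : Sym2 (Fin n) // blockOf u e = some s} = u.card := by
  classical
  let f : {t : Fin n // t ∈ u} → {e : Sym2 (Fin n) // blockOf u e = some s} :=
    fun t => ⟨Sym2.mk s t.1, blockOf_mk hs t.2⟩
  have hbij : Function.Bijective f := by
    constructor
    · rintro ⟨t, ht⟩ ⟨t', ht'⟩ h
      simp only [f, Subtype.mk.injEq, Sym2.eq_iff] at h
      rcases h with ⟨-, h⟩ | ⟨h1, h2⟩
      · exact Subtype.ext h
      · exact absurd (h1 ▸ ht') hs
    · rintro ⟨e, he⟩
      obtain ⟨t, ht, rfl⟩ := (blockOf_eq_some hs e).1 he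
      exact ⟨⟨t, ht⟩, rfl⟩
  rw [← Fintype.card_coe u]
  exact (Fintype.card_of_bijective hbij).symm

noncomputable def Bu (u : Finset (Fin n)) :
    ∀ k : Option (Fin n), Finset ({e : Sym2 (Fin n) // blockOf u e = k} → Bool) :=
  fun k => match k with
  | none => Finset.univ
  | some s => if s ∈ u then Finset.univ
      else Finset.univ.filter (fun h => ¬ ∀ e, h e = true)

lemma measure_blockSet {p : ℝ≥0∞} (hp : p ≤ 1) (u : Finset (Fin n)) :
    graphMeasure n p {E : Sym2 (Fin n) → Bool |
        ∀ k, (fun e : {e : Sym2 (Fin n) // blockOf u e = k} => E e.1) ∈ Bu u k}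
      = (1 - p ^ u.card) ^ (n - u.card) := by
  classical
  rw [measure_set_eq_sum]
  have hsum : (∑ E : Sym2 (Fin n) → Bool,
      if E ∈ {E : Sym2 (Fin n) → Bool |
          ∀ k, (fun e : {e : Sym2 (Fin n) // blockOf u e = k} => E e.1) ∈ Bu u k}
        then graphMeasure n p {E} else 0)
      = ∑ E : Sym2 (Fin n) → Bool,
        (if ∀ k, (fun e : {e : Sym2 (Fin n) // blockOf u e = k} => E e.1) ∈ Bu u k
          then ∏ e, bWeight p (E e) else 0) := by
    refine Finset.sum_congr rfl fun E _ => ?_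
    by_cases hE : ∀ k, (fun e : {e : Sym2 (Fin n) // blockOf u e = k} => E e.1) ∈ Bu u k
    · simp only [Set.mem_setOf_eq, if_pos hE, graphMeasure_singleton hp]
    · simp only [Set.mem_setOf_eq, if_neg hE]
  rw [hsum, key_sum_prod (blockOf u) (bWeight p) (Bu u), Fintype.prod_option]
  have hnone : ∑ h ∈ Bu u none, ∏ e, bWeight p (h e) = 1 := sum_all_fun hp
  have hsome : ∀ s : Fin n, (∑ h ∈ Bu u (some s), ∏ e, bWeight p (h e))
      = if s ∈ u then 1 else (1 - p ^ u.card) := by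
    intro s
    by_cases hs : s ∈ u
    · rw [if_pos hs]
      have : Bu u (some s) = Finset.univ := by simp [Bu, hs]
      rw [this]
      exact sum_all_fun hp
    · rw [if_neg hs]
      have : Bu u (some s)
          = Finset.univ.filter (fun h => ¬ ∀ e, h e = true) := by simp [Bu, hs]
      rw [this, sum_not_all_fun hp, card_fiber u hs]
  rw [hnone, one_mul, Finset.prod_congr rfl (fun s _ => hsome s)]
  rw [Finset.prod_ite, Finset.prod_const_one, one_mul, Finset.prod_const]
  congr 1
  have hfil : univ.filter (fun s : Fin n => ¬ s ∈ u) = uᶜ := by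
    ext s; simp
  rw [hfil, Finset.card_compl, Fintype.card_fin]

end Block

/-! ### Decay estimates in `ℝ≥0∞` -/

lemma one_add_nmul_le (x : ℝ≥0∞) : ∀ r : ℕ, 1 + r * x ≤ (1 + x) ^ r := by
  intro r
  induction r with
  | zero => simp
  | succ r ih =>
    rw [pow_succ]
    calc 1 + (r + 1 : ℕ) * x = (1 + r * x) + x := by push_cast; ring
    _ ≤ (1 + x) ^ r + x := by gcongr
    _ ≤ (1 + x) ^ r + (1 + x) ^ r * x :=
        add_le_add_right (le_mul_of_one_le_left' (one_le_pow_of_one_le' le_self_add r)) _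
    _ = (1 + x) ^ r * (1 + x) := by ring

lemma sub_one_mul_add_one_le (x : ℝ≥0∞) (hx : x ≤ 1) : (1 - x) * (1 + x) ≤ 1 := by
  rw [mul_add, mul_one]
  calc (1 - x) + (1 - x) * x ≤ (1 - x) + x :=
        add_le_add_right ((mul_le_mul_left tsub_le_self x).trans_eq (one_mul x)) _
  _ = 1 := tsub_add_cancel_of_le hx

lemma pow_sub_le_half {x : ℝ≥0∞} {r : ℕ} (hx1 : x ≤ 1) (hrx : 1 ≤ (r : ℝ≥0∞) * x) :
    (1 - x) ^ r ≤ 2⁻¹ := by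
  have hb2 : (2 : ℝ≥0∞) ≤ (1 + x) ^ r := by
    calc (2 : ℝ≥0∞) = 1 + 1 := by norm_num
    _ ≤ 1 + (r : ℝ≥0∞) * x := by gcongr
    _ ≤ (1 + x) ^ r := one_add_nmul_le x r
  have hmul : (1 - x) ^ r * (1 + x) ^ r ≤ 1 := by
    rw [← mul_pow]
    exact pow_le_one' (sub_one_mul_add_one_le x hx1) r
  exact (ENNReal.le_inv_iff_mul_le.mpr hmul).trans (ENNReal.inv_le_inv' hb2)

lemma pow_decay {x : ℝ≥0∞} (hx1 : x ≤ 1) {r L M : ℕ} (hrx : 1 ≤ (r : ℝ≥0∞) * x)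
    (hM : L * r ≤ M) : (1 - x) ^ M ≤ 2⁻¹ ^ L := by
  calc (1 - x) ^ M ≤ (1 - x) ^ (L * r) :=
        pow_le_pow_of_le_one zero_le tsub_le_self hM
  _ = ((1 - x) ^ r) ^ L := by rw [mul_comm, pow_mul]
  _ ≤ (2⁻¹) ^ L := pow_le_pow_left' (pow_sub_le_half hx1 hrx) L

lemma two_pow_mul_inv_two_pow_le {A L i : ℕ} (h : i + A ≤ L) :
    (2 : ℝ≥0∞) ^ A * 2⁻¹ ^ L ≤ 2⁻¹ ^ i := by
  have hL : (2⁻¹ : ℝ≥0∞) ^ L = 2⁻¹ ^ A * 2⁻¹ ^ i * 2⁻¹ ^ (L - A - i) := by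
    rw [← pow_add, ← pow_add]
    congr 1
    omega
  rw [hL]
  calc (2:ℝ≥0∞) ^ A * (2⁻¹ ^ A * 2⁻¹ ^ i * 2⁻¹ ^ (L - A - i))
      = ((2:ℝ≥0∞) * 2⁻¹) ^ A * (2⁻¹ ^ i * 2⁻¹ ^ (L - A - i)) := by
        rw [mul_pow]; ring
  _ = 2⁻¹ ^ i * 2⁻¹ ^ (L - A - i) := by
        rw [ENNReal.mul_inv_cancel (by norm_num) (by norm_num), one_pow, one_mul]
  _ ≤ 2⁻¹ ^ i * 1 := by
        gcongr
        exact pow_le_one' (ENNReal.inv_le_one.2 one_le_two) _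
  _ = 2⁻¹ ^ i := mul_one _

/-! ### Counting small vertex sets -/

lemma card_small_sets_le (n K : ℕ) (hn : 1 ≤ n) :
    (univ.filter (fun u : Finset (Fin n) => u.card ≤ K)).card ≤ (K + 1) * n ^ K := by
  classical
  have hsub : univ.filter (fun u : Finset (Fin n) => u.card ≤ K)
      ⊆ (Finset.range (K + 1)).biUnion (fun k => Finset.univ.powersetCard k) := by
    intro u hu
    simp only [mem_filter, mem_univ, true_and] at hu
    rw [Finset.mem_biUnion]
    exact ⟨u.card, Finset.mem_range.2 (Nat.lt_succ_of_le hu),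
      Finset.mem_powersetCard.2 ⟨Finset.subset_univ u, rfl⟩⟩
  calc (univ.filter (fun u : Finset (Fin n) => u.card ≤ K)).card
      ≤ ((Finset.range (K + 1)).biUnion (fun k => Finset.univ.powersetCard k)).card :=
        Finset.card_le_card hsub
  _ ≤ ∑ k ∈ Finset.range (K + 1), (Finset.univ.powersetCard k : Finset (Finset (Fin n))).card :=
        Finset.card_biUnion_le
  _ ≤ ∑ k ∈ Finset.range (K + 1), n ^ K := by
      refine Finset.sum_le_sum fun k hk => ?_
      rw [Finset.card_powersetCard, Finset.card_univ, Fintype.card_fin]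
      calc n.choose k ≤ n ^ k := Nat.choose_le_pow n k
      _ ≤ n ^ K := Nat.pow_le_pow_right hn (Nat.lt_succ_iff.1 (Finset.mem_range.1 hk))
  _ = (K + 1) * n ^ K := by rw [Finset.sum_const, Finset.card_range, smul_eq_mul]

/-! ### The union bound -/

lemma measure_bad_le {n K : ℕ} {p : ℝ≥0∞} (hp : p ≤ 1) (hn : 1 ≤ n) :
    graphMeasure n p {E : Sym2 (Fin n) → Bool |
        ∃ u : Finset (Fin n), u.card ≤ K ∧
          ¬ ∃ s : Fin n, ∀ t ∈ u, E (Sym2.mk s t) = true}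
      ≤ (((K + 1) * n ^ K : ℕ) : ℝ≥0∞) * (1 - p ^ K) ^ (n - K) := by
  classical
  set F := (univ.filter (fun u : Finset (Fin n) => u.card ≤ K)) with hF
  set S : Finset (Fin n) → Set (Sym2 (Fin n) → Bool) := fun u =>
    {E : Sym2 (Fin n) → Bool |
      ∀ k, (fun e : {e : Sym2 (Fin n) // blockOf u e = k} => E e.1) ∈ Bu u k} with hS
  have hcover : {E : Sym2 (Fin n) → Bool |
      ∃ u : Finset (Fin n), u.card ≤ K ∧
        ¬ ∃ s : Fin n, ∀ t ∈ u, E (Sym2.mk s t) = true}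
      ⊆ ⋃ u ∈ F, S u := by
    rintro E ⟨u, hu, hne⟩
    have huF : u ∈ F := by simp [hF, hu]
    refine Set.mem_biUnion huF ?_
    intro k
    match k with
    | none => exact Finset.mem_univ _
    | some s =>
      by_cases hs : s ∈ u
      · have hB : Bu u (some s) = Finset.univ := by simp [Bu, hs]
        rw [hB]
        exact Finset.mem_univ _
      · have hB : Bu u (some s)
            = Finset.univ.filter (fun h => ¬ ∀ e, h e = true) := by simp [Bu, hs]
        rw [hB, Finset.mem_filter]
        refine ⟨Finset.mem_univ _, fun hall => hne ⟨s, fun t ht => ?_⟩⟩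
        exact hall ⟨Sym2.mk s t, blockOf_mk hs ht⟩
  calc graphMeasure n p {E : Sym2 (Fin n) → Bool |
        ∃ u : Finset (Fin n), u.card ≤ K ∧
          ¬ ∃ s : Fin n, ∀ t ∈ u, E (Sym2.mk s t) = true}
      ≤ graphMeasure n p (⋃ u ∈ F, S u) := measure_mono hcover
  _ ≤ ∑ u ∈ F, graphMeasure n p (S u) := measure_biUnion_finset_le F S
  _ ≤ ∑ _u ∈ F, (1 - p ^ K) ^ (n - K) := by
      refine Finset.sum_le_sum fun u hu => ?_
      rw [hS]
      rw [measure_blockSet hp u]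
      have hcard : u.card ≤ K := by
        have := hu
        rw [hF, Finset.mem_filter] at this
        exact this.2
      calc (1 - p ^ u.card) ^ (n - u.card) ≤ (1 - p ^ K) ^ (n - u.card) :=
            pow_le_pow_left'
              (tsub_le_tsub_left (pow_le_pow_of_le_one zero_le hp hcard) 1) _
      _ ≤ (1 - p ^ K) ^ (n - K) :=
            pow_le_pow_of_le_one zero_le tsub_le_self (Nat.sub_le_sub_left hcard n)
  _ = (F.card : ℝ≥0∞) * (1 - p ^ K) ^ (n - K) := by
      rw [Finset.sum_const, nsmul_eq_mul]
  _ ≤ (((K + 1) * n ^ K : ℕ) : ℝ≥0∞) * (1 - p ^ K) ^ (n - K) := by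
      gcongr
      exact_mod_cast card_small_sets_le n K hn

lemma pow_four_le_two_pow {q : ℕ} (hq : 32 ≤ q) : (q + 1) ^ 4 ≤ 2 ^ q := by
  induction q, hq using Nat.le_induction with
  | base => norm_num
  | succ q hq ih =>
    have ht : 33 ≤ q + 1 := by omega
    set t := q + 1 with hts
    have e1 : 33 * t ^ 3 ≤ t ^ 4 := by
      calc 33 * t ^ 3 ≤ t * t ^ 3 := Nat.mul_le_mul_right _ ht
      _ = t ^ 4 := by ring
    have e2 : t ^ 2 ≤ t ^ 3 := Nat.pow_le_pow_right (by omega) (by omega)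
    have e3 : t ≤ t ^ 3 := Nat.le_self_pow (by omega) t
    have e4 : 1 ≤ t ^ 3 := by omega
    have h2 : (t + 1) ^ 4 ≤ 2 * t ^ 4 := by
      have : (t + 1) ^ 4 = t ^ 4 + 4 * t ^ 3 + 6 * t ^ 2 + 4 * t + 1 := by ring
      rw [this]
      nlinarith [e1, e2, e3, e4]
    calc (t + 1) ^ 4 ≤ 2 * t ^ 4 := h2
    _ ≤ 2 * 2 ^ q := by
        have := ih
        omega
    _ = 2 ^ (q + 1) := by ring

lemma nat_main_ineq {i K n : ℕ} (hiK : i ≤ K) (hK : 16 ≤ K) (hn : K ^ (4 * K) ≤ n) :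
    i + (Nat.log 2 n + 1) * (K + 1) ≤ (n - K) / (Nat.sqrt n + 1) := by
  set s := Nat.sqrt n with hs
  set q := Nat.sqrt s with hq
  have hKs : K ^ (2 * K) ≤ s := by
    rw [hs, Nat.le_sqrt]
    calc K ^ (2 * K) * K ^ (2 * K) = K ^ (4 * K) := by rw [← pow_add]; congr 1; omega
    _ ≤ n := hn
  have hKq : K ^ K ≤ q := by
    rw [hq, Nat.le_sqrt]
    calc K ^ K * K ^ K = K ^ (2 * K) := by rw [← pow_add]; congr 1; omega
    _ ≤ s := hKs
  have hK2q : K * K ≤ q := by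
    refine le_trans ?_ hKq
    calc K * K = K ^ 2 := by ring
    _ ≤ K ^ K := Nat.pow_le_pow_right (by omega) (by omega)
  have h16K : 16 * K ≤ K * K := Nat.mul_le_mul_right K hK
  have hq32 : 32 ≤ q := by omega
  have hqq : q * q ≤ s := by
    have h := Nat.sqrt_le' s
    rwa [pow_two] at h
  have hss : s * s ≤ n := by
    have h := Nat.sqrt_le' n
    rwa [pow_two] at h
  have hlog : Nat.log 2 n + 1 ≤ q := by
    have hn4 : n < (q + 1) ^ 4 := by
      calc n < (s + 1) ^ 2 := Nat.lt_succ_sqrt' n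
      _ ≤ ((q + 1) ^ 2) ^ 2 :=
          Nat.pow_le_pow_left (Nat.succ_le_of_lt (Nat.lt_succ_sqrt' s)) 2
      _ = (q + 1) ^ 4 := by ring
    have h2q : n < 2 ^ q := lt_of_lt_of_le hn4 (pow_four_le_two_pow hq32)
    have hn0 : n ≠ 0 := by
      have : 1 ≤ K ^ (4 * K) := Nat.one_le_pow _ _ (by omega)
      omega
    have := Nat.log_lt_of_lt_pow hn0 h2q
    omega
  rw [Nat.le_div_iff_mul_le (by omega : 0 < s + 1)]
  have hKK : K ≤ K * K := Nat.le_mul_of_pos_left K (by omega)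
  have hiq : i ≤ q := by omega
  have hstep1 : (i + (Nat.log 2 n + 1) * (K + 1)) ≤ 2 * K * q := by
    have h1 : (Nat.log 2 n + 1) * (K + 1) ≤ q * (K + 1) := Nat.mul_le_mul_right (K + 1) hlog
    calc i + (Nat.log 2 n + 1) * (K + 1) ≤ q + q * (K + 1) := by omega
    _ = q * (K + 2) := by ring
    _ ≤ q * (2 * K) := Nat.mul_le_mul_left q (by omega)
    _ = 2 * K * q := by ring
  have hKle_s : K ≤ s := by
    have : K ≤ K ^ (2 * K) := Nat.le_self_pow (by omega) K
    omega
  have hq4K : 4 * K + 1 ≤ q := by omega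
  have hq1 : 1 ≤ q := by omega
  have hs1 : 1 ≤ s := by omega
  calc (i + (Nat.log 2 n + 1) * (K + 1)) * (s + 1)
      ≤ (2 * K * q) * (s + 1) := Nat.mul_le_mul_right _ hstep1
  _ ≤ (2 * K * q) * (2 * s) := Nat.mul_le_mul_left _ (by omega)
  _ = (4 * K * q) * s := by ring
  _ ≤ n - K := by
      have ha : 4 * K * q + 1 ≤ q * q := by
        calc 4 * K * q + 1 ≤ 4 * K * q + q := by omega
        _ = (4 * K + 1) * q := by ring
        _ ≤ q * q := Nat.mul_le_mul_right q hq4K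
      have hb : (4 * K * q) * s + s ≤ (q * q) * s := by
        calc (4 * K * q) * s + s = (4 * K * q + 1) * s := by ring
        _ ≤ (q * q) * s := Nat.mul_le_mul_right s ha
      have hc : (q * q) * s ≤ s * s := Nat.mul_le_mul_right s hqq
      omega

/-! ### Facts about fast sequences -/

lemma fastSeq_one_le {m : ℕ → ℕ} (hm : FastSeq m) : ∀ i, 1 ≤ m i := by
  intro i
  induction i using Nat.strong_induction_on with
  | _ i ih =>
    have hc : 1 ≤ mCirc m i := Finset.one_le_prod' fun j hj => ih j (Finset.mem_range.1 hj)
    have h := hm.2 i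
    have h1 : 1 ≤ (mCirc m i ^ i ^ i) ^ (4 * mCirc m i ^ i ^ i) :=
      Nat.one_le_pow _ _ (pow_pos hc _)
    omega

lemma fastSeq_mCirc_two_le {m : ℕ → ℕ} (hm : FastSeq m) {i : ℕ} (hi : 1 ≤ i) :
    2 ≤ mCirc m i := by
  have h0 : m 0 ≤ mCirc m i :=
    Finset.single_le_prod' (fun j _ => fastSeq_one_le hm j) (Finset.mem_range.2 (by omega))
  have := hm.1
  omega

lemma pEdge_le_one {m : ℕ → ℕ} (hm : FastSeq m) (i : ℕ) : pEdge m i ≤ 1 := by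
  have h1 : (1 : ℝ≥0∞) ≤ (m i : ℝ≥0∞) := by
    exact_mod_cast fastSeq_one_le hm i
  have hc : (1 : ℝ) ≤ (mCirc m i : ℝ) ^ (i ^ i) := by
    have : 1 ≤ mCirc m i ^ i ^ i :=
      Nat.one_le_pow _ _ (by
        have := fastSeq_one_le hm
        have : 1 ≤ mCirc m i := Finset.one_le_prod' fun j _ => fastSeq_one_le hm j
        omega)
    exact_mod_cast this
  refine ENNReal.rpow_le_one_of_one_le_of_neg h1 ?_
  rw [div_neg_iff]
  right
  constructor
  · norm_num
  · linarith

lemma pEdge_pow {m : ℕ → ℕ} (hm : FastSeq m) (i : ℕ) :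
    pEdge m i ^ (mCirc m i ^ i ^ i) = (m i : ℝ≥0∞) ^ (-(1 / 2) : ℝ) := by
  have hc1 : 1 ≤ mCirc m i := Finset.one_le_prod' fun j _ => fastSeq_one_le hm j
  have hcR : ((mCirc m i ^ i ^ i : ℕ) : ℝ) = (mCirc m i : ℝ) ^ (i ^ i) := by push_cast; rfl
  have hcpos : (0 : ℝ) < (mCirc m i : ℝ) ^ (i ^ i) := by
    have : (1 : ℝ) ≤ (mCirc m i : ℝ) := by exact_mod_cast hc1
    positivity
  rw [← ENNReal.rpow_natCast (pEdge m i) (mCirc m i ^ i ^ i), pEdge, ← ENNReal.rpow_mul]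
  congr 1
  rw [hcR]
  field_simp

/-! ### The main quantitative bound -/

lemma measure_badEvent_le {m : ℕ → ℕ} (hm : FastSeq m) {i : ℕ} (hi : 2 ≤ i) :
    graphMeasure (m i) (pEdge m i) (badEvent m i) ≤ 2⁻¹ ^ i := by
  classical
  set n := m i with hn
  set K := mCirc m i ^ i ^ i with hK
  set p := pEdge m i with hp
  -- basic numeric facts
  have hc2 : 2 ≤ mCirc m i := fastSeq_mCirc_two_le hm (by omega)
  have hii4 : 4 ≤ i ^ i := by
    calc 4 = 2 ^ 2 := by norm_num
    _ ≤ i ^ 2 := Nat.pow_le_pow_left hi 2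
    _ ≤ i ^ i := Nat.pow_le_pow_right (by omega) hi
  have hK16 : 16 ≤ K := by
    calc 16 = 2 ^ 4 := by norm_num
    _ ≤ 2 ^ (i ^ i) := Nat.pow_le_pow_right (by omega) hii4
    _ ≤ mCirc m i ^ (i ^ i) := Nat.pow_le_pow_left hc2 _
  have hiK : i ≤ K := by
    have h1 : i ≤ 2 ^ i := (Nat.lt_two_pow_self (n := i)).le
    have h2 : 2 ^ i ≤ 2 ^ (i ^ i) :=
      Nat.pow_le_pow_right (by omega) (Nat.le_self_pow (by omega) i)
    have h3 : 2 ^ (i ^ i) ≤ K := Nat.pow_le_pow_left hc2 _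
    omega
  have hnK : K ^ (4 * K) ≤ n := hm.2 i
  have hKn : K + 1 ≤ n := by
    have h1 : K + 1 ≤ K * K := by nlinarith
    have h2 : K * K ≤ K ^ (4 * K) := by
      calc K * K = K ^ 2 := by ring
      _ ≤ K ^ (4 * K) := Nat.pow_le_pow_right (by omega) (by omega)
    omega
  have hn1 : 1 ≤ n := by omega
  have hp1 : p ≤ 1 := pEdge_le_one hm i
  -- the edge probability raised to the K-th power
  have hxval : p ^ K = (n : ℝ≥0∞) ^ (-(1 / 2) : ℝ) := pEdge_pow hm i
  set x := p ^ K with hx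
  have hnne0 : (n : ℝ≥0∞) ≠ 0 := by
    simp only [ne_eq, Nat.cast_eq_zero]
    omega
  have hnnet : (n : ℝ≥0∞) ≠ ⊤ := ENNReal.natCast_ne_top n
  have hx1 : x ≤ 1 := by
    rw [hxval]
    exact ENNReal.rpow_le_one_of_one_le_of_neg (by exact_mod_cast hn1) (by norm_num)
  -- r * x ≥ 1 for r = sqrt n + 1
  set r := Nat.sqrt n + 1 with hr
  have hrx : 1 ≤ (r : ℝ≥0∞) * x := by
    have hsq : (n : ℝ≥0∞) ≤ ((r : ℕ) : ℝ≥0∞) ^ (2 : ℕ) := by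
      exact_mod_cast (Nat.lt_succ_sqrt' n).le
    have h12 : (n : ℝ≥0∞) ^ ((1 : ℝ) / 2) ≤ ((r : ℕ) : ℝ≥0∞) := by
      calc (n : ℝ≥0∞) ^ ((1 : ℝ) / 2) ≤ (((r : ℕ) : ℝ≥0∞) ^ (2 : ℕ)) ^ ((1 : ℝ) / 2) :=
            ENNReal.rpow_le_rpow hsq (by norm_num)
      _ = ((r : ℕ) : ℝ≥0∞) := by
          rw [← ENNReal.rpow_natCast ((r : ℕ) : ℝ≥0∞) 2, ← ENNReal.rpow_mul]
          norm_num
    have hcancel : (n : ℝ≥0∞) ^ ((1 : ℝ) / 2) * (n : ℝ≥0∞) ^ (-(1 / 2) : ℝ) = 1 := by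
      rw [← ENNReal.rpow_add _ _ hnne0 hnnet]
      norm_num
    calc (1 : ℝ≥0∞) = (n : ℝ≥0∞) ^ ((1 : ℝ) / 2) * (n : ℝ≥0∞) ^ (-(1 / 2) : ℝ) := hcancel.symm
    _ ≤ (r : ℝ≥0∞) * x := by
        rw [hxval]
        exact mul_le_mul_left h12 _
  -- decay
  set L := (n - K) / r with hL
  set b := Nat.log 2 n with hb
  have hdecay : (1 - x) ^ (n - K) ≤ 2⁻¹ ^ L :=
    pow_decay hx1 hrx (Nat.div_mul_le_self (n - K) r)
  -- counting
  have hcount : (((K + 1) * n ^ K : ℕ) : ℝ≥0∞) ≤ (2 : ℝ≥0∞) ^ ((b + 1) * (K + 1)) := by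
    have h1 : (K + 1) * n ^ K ≤ n ^ (K + 1) := by
      calc (K + 1) * n ^ K ≤ n * n ^ K := Nat.mul_le_mul_right _ hKn
      _ = n ^ (K + 1) := by ring
    have h2 : n ^ (K + 1) ≤ (2 ^ (b + 1)) ^ (K + 1) :=
      Nat.pow_le_pow_left (Nat.lt_pow_succ_log_self (by norm_num) n).le _
    have h3 : (2 ^ (b + 1)) ^ (K + 1) = 2 ^ ((b + 1) * (K + 1)) := by
      rw [← pow_mul]
    have : (K + 1) * n ^ K ≤ 2 ^ ((b + 1) * (K + 1)) := by omega
    exact_mod_cast this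
  -- the key arithmetic inequality
  have harith : i + (b + 1) * (K + 1) ≤ L := nat_main_ineq hiK hK16 hnK
  -- put everything together
  calc graphMeasure n p (badEvent m i)
      ≤ (((K + 1) * n ^ K : ℕ) : ℝ≥0∞) * (1 - p ^ K) ^ (n - K) :=
        measure_bad_le hp1 hn1
  _ ≤ (2 : ℝ≥0∞) ^ ((b + 1) * (K + 1)) * (2⁻¹ ^ L) := by
      exact mul_le_mul' hcount hdecay
  _ ≤ 2⁻¹ ^ i := two_pow_mul_inv_two_pow_le harith

/-! ### Main theorem -/

/-- For a fast sequence `m`, the probability (under the random graph measure with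
edge probability `p_i = m(i)^{−1/g(i)}`) that some set of at most `(m°(i))^(i^i)`
vertices has no common neighbor tends to `0` as `i → ∞`.  In particular, for all
sufficiently large `i` there is a (symmetric, loops-allowed) graph on `{0,…,m(i)−1}`
in which every set of at most `(m°(i))^(i^i)` vertices has a common neighbor. -/
theorem fastSeq_random_graph_small_sets_covered (m : ℕ → ℕ) (hm : FastSeq m) :
    Filter.Tendsto (fun i : ℕ => graphMeasure (m i) (pEdge m i) (badEvent m i))
      Filter.atTop (nhds 0) ∧
    ∀ᶠ i : ℕ in Filter.atTop, ∃ E : Sym2 (Fin (m i)) → Bool,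
      ∀ u : Finset (Fin (m i)), u.card ≤ mCirc m i ^ i ^ i →
        ∃ s : Fin (m i), ∀ t ∈ u, E (Sym2.mk s t) = true := by
  have hb : ∀ᶠ i : ℕ in Filter.atTop,
      graphMeasure (m i) (pEdge m i) (badEvent m i) ≤ 2⁻¹ ^ i := by
    rw [Filter.eventually_atTop]
    exact ⟨2, fun i hi => measure_badEvent_le hm hi⟩
  have hg : Filter.Tendsto (fun i : ℕ => (2⁻¹ : ℝ≥0∞) ^ i) Filter.atTop (nhds 0) :=
    ENNReal.tendsto_pow_atTop_nhds_zero_of_lt_one (by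
      rw [ENNReal.inv_lt_one]; exact ENNReal.one_lt_two)
  have h1 : Filter.Tendsto (fun i : ℕ => graphMeasure (m i) (pEdge m i) (badEvent m i))
      Filter.atTop (nhds 0) := by
    rw [ENNReal.tendsto_nhds_zero]
    intro ε hε
    have h2 := (ENNReal.tendsto_nhds_zero.1 hg) ε hε
    filter_upwards [hb, h2] with i hi1 hi2
    exact hi1.trans hi2
  refine ⟨h1, ?_⟩
  have hlt : ∀ᶠ i : ℕ in Filter.atTop,
      graphMeasure (m i) (pEdge m i) (badEvent m i) < 1 :=
    h1.eventually (eventually_lt_nhds zero_lt_one)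
  filter_upwards [hlt] with i hi
  haveI := bernoulliBool_prob (pEdge_le_one hm i)
  haveI : IsProbabilityMeasure (graphMeasure (m i) (pEdge m i)) := by
    rw [graphMeasure]; infer_instance
  have hne : badEvent m i ≠ Set.univ := by
    intro h
    rw [h, measure_univ] at hi
    exact lt_irrefl _ hi
  obtain ⟨E, hE⟩ := (Set.ne_univ_iff_exists_notMem _).1 hne
  refine ⟨E, fun u hu => ?_⟩
  rw [badEvent, Set.mem_setOf_eq] at hE
  push_neg at hE
  exact hE u hu
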